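/- Let G be a two-step nilpotent π-torsion-free group (i.e., nilpotency class at most 2). Then the π-isolator I_π(G') of the commutator subgroup G' of G is an abelian subgroup of G. -/

import Mathlib

def IsPiNumber (π : Set ℕ) (n : ℕ) : Prop :=
  0 < n ∧ ∀ p : ℕ, p.Prime → p ∣ n → p ∈ π

theorem isolator_of_commutator_abelian (G : Type*) [Group G]
    [Group.IsNilpotent G]
    (hclass : Group.nilpotencyClass G ≤ 2) (π : Set ℕ)
    (hTF : ∀ g : G, ∀ n : ℕ, IsPiNumber π n → g ^ n = 1 → g = 1) :
    ∃ K : Subgroup G,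
      (K : Set G) = {g : G | ∃ n : ℕ, IsPiNumber π n ∧ g ^ n ∈ commutator G} ∧
      ∀ a b : G, a ∈ K → b ∈ K → a * b = b * a := by
  have hbot : Subgroup.lowerCentralSeries (⊤ : Subgroup G) 2 = ⊥ :=
    lowerCentralSeries_eq_bot_iff_nilpotencyClass_le.mpr hclass
  -- commutator subgroup is central
  have hcent : ∀ c : G, c ∈ commutator G → ∀ x : G, c * x = x * c := by
    intro c hc x
    open scoped commutatorElement in
    have h : ⁅c, x⁆ ∈ Subgroup.lowerCentralSeries (⊤ : Subgroup G) 2 := by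
      have : Subgroup.lowerCentralSeries (⊤ : Subgroup G) 2 = ⁅commutator G, (⊤ : Subgroup G)⁆ := by
        rw [show (2:ℕ) = 1 + 1 from rfl, lowerCentralSeries_succ,
          Subgroup.top_lowerCentralSeries_one]
      rw [this]
      exact Subgroup.commutator_mem_commutator hc (Subgroup.mem_top x)
    rw [hbot, Subgroup.mem_bot, commutatorElement_def, mul_inv_eq_one,
      mul_inv_eq_iff_eq_mul] at h
    rw [h]
  -- key commuting lemma
  have key : ∀ a b : G, (∃ n : ℕ, IsPiNumber π n ∧ a ^ n ∈ commutator G) →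
      (∃ n : ℕ, IsPiNumber π n ∧ b ^ n ∈ commutator G) → a * b = b * a := by
    rintro a b ⟨m, hm, ham⟩ -
    set c := a * b * a⁻¹ * b⁻¹ with hcdef
    have hcmem : c ∈ commutator G := by
      open scoped commutatorElement in
      have : c = ⁅a, b⁆ := by rw [commutatorElement_def]
      rw [this]
      exact Subgroup.commutator_mem_commutator (Subgroup.mem_top a) (Subgroup.mem_top b)
    have hab : a * b = c * b * a := by rw [hcdef]; group
    have hstep : ∀ k : ℕ, a ^ k * b = c ^ k * b * a ^ k := by
      intro k
      induction k with
      | zero => simp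
      | succ k ih =>
        calc a ^ (k+1) * b = a * (a ^ k * b) := by rw [pow_succ']; group
          _ = a * (c ^ k * b * a ^ k) := by rw [ih]
          _ = a * c ^ k * (b * a ^ k) := by group
          _ = c ^ k * a * (b * a ^ k) := by
              rw [← hcent (c ^ k) (pow_mem hcmem k) a]
          _ = c ^ k * (a * b) * a ^ k := by group
          _ = c ^ k * (c * b * a) * a ^ k := by rw [hab]
          _ = c ^ (k+1) * b * a ^ (k+1) := by rw [pow_succ, pow_succ']; group
    have h1 : a ^ m * b = b * a ^ m := hcent (a ^ m) ham b
    have h2 : c ^ m * b * a ^ m = b * a ^ m := by rw [← hstep m, h1]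
    have hc1 : c ^ m = 1 := by
      have h3 : c ^ m * b = b := mul_right_cancel h2
      exact mul_eq_right.mp h3
    have : c = 1 := hTF c m hm hc1
    rw [hab, this, one_mul]
  refine ⟨{
    carrier := {g : G | ∃ n : ℕ, IsPiNumber π n ∧ g ^ n ∈ commutator G}
    one_mem' := ⟨1, ⟨one_pos, fun p hp hd => (hp.ne_one (Nat.dvd_one.mp hd)).elim⟩,
      by simpa using Subgroup.one_mem _⟩
    mul_mem' := by
      rintro a b ⟨m, hm, ham⟩ ⟨n, hn, hbn⟩
      refine ⟨m * n, ⟨Nat.mul_pos hm.1 hn.1, fun p hp hd => ?_⟩, ?_⟩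
      · rcases (Nat.Prime.dvd_mul hp).mp hd with h | h
        · exact hm.2 p hp h
        · exact hn.2 p hp h
      · have hcomm : Commute a b := key a b ⟨m, hm, ham⟩ ⟨n, hn, hbn⟩
        rw [hcomm.mul_pow]
        have h1 : a ^ (m * n) ∈ commutator G := by
          rw [pow_mul]; exact pow_mem ham n
        have h2 : b ^ (m * n) ∈ commutator G := by
          rw [mul_comm, pow_mul]; exact pow_mem hbn m
        exact mul_mem h1 h2
    inv_mem' := by
      rintro a ⟨m, hm, ham⟩
      exact ⟨m, hm, by rw [inv_pow]; exact inv_mem ham⟩ }, rfl, ?_⟩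
  intro a b ha hb
  exact key a b ha hb
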